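/- Let Q be a weakly connected quiver containing at least one oriented cycle, and let d be the greatest common divisor of the lengths of all oriented cycles of Q. Then for every vertex i of Q and every n ∈ ℤ, the vertices (i, n) and (i, n + d) lie in the same weakly connected component of the separated quiver ℤ_v Q; consequently ℤ_v Q has at most d weakly connected components (there is a surjection from Fin d onto the set of weakly connected components of ℤ_v Q). -/

import Mathlib

/-- The separated quiver `ℤ_v Q` of a quiver `Q`: the vertices are `Q × ℤ`, and for each
arrow `α : i ⟶ j` of `Q` and each `n : ℤ` there is one arrow `(i, n) ⟶ (j, n + 1)`. -/
instance sepQuiver (Q : Type) [Quiver Q] : Quiver (Q × ℤ) :=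
  ⟨fun p q => (p.1 ⟶ q.1) × PLift (q.2 = p.2 + 1)⟩

namespace SepAux

open Quiver

variable {Q : Type} [Quiver Q]

/-- Signed length of a path in the symmetrification. -/
def slen : ∀ {a b : Symmetrify Q}, Path a b → ℤ
  | _, _, .nil => 0
  | _, _, .cons p e => slen p + (match e with | .inl _ => 1 | .inr _ => -1)

lemma slen_comp {a b c : Symmetrify Q} (p : Path a b) (q : Path b c) :
    slen (p.comp q) = slen p + slen q := by
  induction q with
  | nil => simp [slen]
  | cons q e ih => rcases e with _ | _ <;> simp [slen, ih] <;> ring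

lemma slen_toPath {a b : Symmetrify Q} (e : a ⟶ b) :
    slen e.toPath = (match e with | .inl _ => 1 | .inr _ => -1) := by
  rcases e with _ | _ <;> simp [Hom.toPath, slen]

lemma slen_reverse {a b : Symmetrify Q} (p : Path a b) : slen p.reverse = - slen p := by
  induction p with
  | nil => simp [slen]
  | cons p e ih =>
    rw [Path.reverse, slen_comp, ih, slen_toPath]
    rcases e with _ | _ <;> simp [slen, symmetrify_reverse, Sum.swap] <;> ring

lemma slen_of_mapPath {a b : Q} (p : Path a b) :
    slen ((Symmetrify.of).mapPath p) = p.length := by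
  induction p with
  | nil => simp [Prefunctor.mapPath, slen]
  | cons p e ih =>
    simp only [Prefunctor.mapPath]
    have hstep : slen ((Symmetrify.of.mapPath p).cons (Symmetrify.of.map e)) =
        slen (Symmetrify.of.mapPath p) + 1 := by
      erw [slen]
    rw [hstep, ih, Quiver.Path.length_cons]
    push_cast
    ring

/-- Lifting a zigzag in `Q` to the separated quiver. -/
lemma lift_path : ∀ {i j : Symmetrify Q} (p : Path i j) (n m : ℤ), m = n + slen p →
    Nonempty (@Path (Symmetrify (Q × ℤ)) _ (i, n) (j, m)) := by
  intro i j p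
  induction p with
  | nil => intro n m h; simp [slen] at h; subst h; exact ⟨Path.nil⟩
  | @cons b c p e ih =>
    intro n m h
    obtain ⟨q⟩ := ih n (n + slen p) rfl
    cases e using Sum.casesOn with
    | inl f =>
      have harr : ((b, n + slen p) : Q × ℤ) ⟶ ((c, m) : Q × ℤ) :=
        ⟨f, PLift.up (by simp [slen] at h; omega)⟩
      exact ⟨q.cons (Sum.inl harr)⟩
    | inr f =>
      have harr : ((c, m) : Q × ℤ) ⟶ ((b, n + slen p) : Q × ℤ) :=
        ⟨f, PLift.up (by simp [slen] at h; omega)⟩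
      exact ⟨q.cons (Sum.inr harr)⟩

/-- The subgroup of signed lengths of closed zigzags at a vertex. -/
def sSub (v : Symmetrify Q) : AddSubgroup ℤ where
  carrier := {s | ∃ p : Path v v, slen p = s}
  zero_mem' := ⟨Path.nil, by simp [slen]⟩
  add_mem' := by
    rintro _ _ ⟨p, rfl⟩ ⟨q, rfl⟩
    exact ⟨p.comp q, slen_comp p q⟩
  neg_mem' := by
    rintro _ ⟨p, rfl⟩
    exact ⟨p.reverse, slen_reverse p⟩

end SepAux

/-- Let `Q` be a weakly connected quiver containing at least one oriented cycle, and let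
`d` be the greatest common divisor of the lengths of all oriented cycles of `Q`. Then
for every vertex `i` and every `n : ℤ`, the vertices `(i, n)` and `(i, n + d)` lie in the
same weakly connected component of `ℤ_v Q`; consequently `ℤ_v Q` has at most `d` weakly
connected components. -/
theorem sep_components_at_most_gcd
    (Q : Type) [Quiver Q] [Nonempty Q]
    [Subsingleton (Quiver.WeaklyConnectedComponent Q)]
    (hcyc : ∃ (v : Q) (p : Quiver.Path v v), 0 < p.length)
    (d : ℕ)
    (hdvd : ∀ (v : Q) (p : Quiver.Path v v), 0 < p.length → d ∣ p.length)
    (hgreatest : ∀ e : ℕ,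
      (∀ (v : Q) (p : Quiver.Path v v), 0 < p.length → e ∣ p.length) → e ∣ d) :
    (∀ (i : Q) (n : ℤ),
        Quiver.WeaklyConnectedComponent.mk ((i, n) : Q × ℤ) =
          Quiver.WeaklyConnectedComponent.mk ((i, n + (d : ℤ)) : Q × ℤ)) ∧
      ∃ f : Fin d → Quiver.WeaklyConnectedComponent (Q × ℤ), Function.Surjective f := by
  classical
  obtain ⟨v₀, p₀, hp₀⟩ := hcyc
  have hzz : ∀ a b : Q, Nonempty (@Quiver.Path (Quiver.Symmetrify Q) _ a b) := by
    intro a b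
    exact Quotient.exact' (Subsingleton.elim
      (Quiver.WeaklyConnectedComponent.mk a) (Quiver.WeaklyConnectedComponent.mk b))
  obtain ⟨g, hg⟩ := Int.subgroup_cyclic (SepAux.sSub (Q := Q) v₀)
  have hLmem : ∀ (v : Q) (p : Quiver.Path v v), ((p.length : ℤ)) ∈ SepAux.sSub (Q := Q) v₀ := by
    intro v p
    obtain ⟨q⟩ := hzz v₀ v
    refine ⟨q.comp (((Quiver.Symmetrify.of).mapPath p).comp q.reverse), ?_⟩
    erw [SepAux.slen_comp, SepAux.slen_comp, SepAux.slen_of_mapPath, SepAux.slen_reverse]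
    exact add_add_neg_cancel'_right (G := ℤ) _ _
  have hgdvd : ∀ x : ℤ, x ∈ SepAux.sSub (Q := Q) v₀ ↔ g ∣ x := by
    intro x
    rw [hg, AddSubgroup.mem_closure_singleton]
    constructor
    · rintro ⟨n, rfl⟩; exact ⟨n, by rw [smul_eq_mul, mul_comm]⟩
    · rintro ⟨n, rfl⟩; exact ⟨n, by rw [smul_eq_mul, mul_comm]⟩
  have hgd : g ∣ (d : ℤ) := by
    have he : g.natAbs ∣ d := by
      apply hgreatest
      intro v p _
      have := (hgdvd _).1 (hLmem v p)
      have h2 : g.natAbs ∣ ((p.length : ℤ)).natAbs := Int.natAbs_dvd_natAbs.mpr this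
      simpa using h2
    calc g ∣ (g.natAbs : ℤ) := Int.dvd_natAbs.mpr dvd_rfl
      _ ∣ (d : ℤ) := Int.ofNat_dvd.mpr he
  have hd0 : 0 < d := by
    have hdl := hdvd v₀ p₀ hp₀
    rcases Nat.eq_zero_or_pos d with h | h
    · subst h
      rw [Nat.zero_dvd] at hdl
      omega
    · exact h
  have key : ∀ (i : Q) (n k : ℤ),
      Quiver.WeaklyConnectedComponent.mk ((i, n) : Q × ℤ) =
        Quiver.WeaklyConnectedComponent.mk ((i, n + (d : ℤ) * k) : Q × ℤ) := by
    intro i n k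
    obtain ⟨p, hp⟩ : ((d : ℤ) * k) ∈ SepAux.sSub (Q := Q) v₀ :=
      (hgdvd _).2 (hgd.mul_right k)
    obtain ⟨q⟩ := hzz i v₀
    obtain ⟨r⟩ := SepAux.lift_path (q.comp (p.comp q.reverse)) n (n + (d : ℤ) * k) (by
      erw [SepAux.slen_comp, SepAux.slen_comp, hp, SepAux.slen_reverse]; ring)
    exact Quotient.sound' ⟨r⟩
  constructor
  · intro i n
    simpa using key i n 1
  · refine ⟨fun k => Quiver.WeaklyConnectedComponent.mk ((v₀, (k : ℤ)) : Q × ℤ), ?_⟩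
    intro c
    induction c using Quotient.inductionOn' with
    | h x =>
      obtain ⟨j, m⟩ := x
      obtain ⟨q⟩ := hzz j v₀
      obtain ⟨r⟩ := SepAux.lift_path q m (m + SepAux.slen q) rfl
      set n : ℤ := m + SepAux.slen q with hn
      have h1 : (Quotient.mk'' ((j, m) : Q × ℤ) : Quiver.WeaklyConnectedComponent (Q × ℤ)) =
          Quiver.WeaklyConnectedComponent.mk ((v₀, n) : Q × ℤ) :=
        Quotient.sound' ⟨r⟩
      have hr0 : 0 ≤ n % (d : ℤ) := Int.emod_nonneg n (by exact_mod_cast hd0.ne')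
      have hrd : n % (d : ℤ) < (d : ℤ) := Int.emod_lt_of_pos n (by exact_mod_cast hd0)
      refine ⟨⟨(n % (d : ℤ)).toNat, ?_⟩, ?_⟩
      · omega
      · have h2 := key v₀ (n % (d : ℤ)) (n / (d : ℤ))
        have h3 : n % (d : ℤ) + (d : ℤ) * (n / (d : ℤ)) = n := Int.emod_add_mul_ediv n (d : ℤ)
        rw [h3] at h2
        have hcast : (((n % (d : ℤ)).toNat : ℤ)) = n % (d : ℤ) := Int.toNat_of_nonneg hr0
        simp only [hcast]
        rw [h2, ← h1]
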